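/- Let k be a finite field, Q a finite quiver, Θ a stability, and M a stable k-representation of Q. Then every nonzero endomorphism of M is an isomorphism, the endomorphism ring End(M) is commutative, and hence End(M) is a finite field extension of k. -/
import Mathlib

set_option synthInstance.maxHeartbeats 1000000
set_option maxHeartbeats 1000000

/-- A finite quiver: a finite set of vertices, a finite set of arrows,
each with a source and a target vertex. -/
structure FinQuiver where
  V : Type
  A : Type
  [fintypeV : Fintype V]
  [fintypeA : Fintype A]
  src : A → V
  tgt : A → V

attribute [instance] FinQuiver.fintypeV FinQuiver.fintypeA

namespace FinQuiver

/-- A `k`-representation of `Q` of dimension vector `d`: a matrix for every arrow. -/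
def Rep (Q : FinQuiver) (k : Type) [Field k] (d : Q.V → ℕ) : Type :=
  ∀ a : Q.A, Matrix (Fin (d (Q.tgt a))) (Fin (d (Q.src a))) k

variable {Q : FinQuiver}

/-- A family of subspaces is a subrepresentation if it is stable under all arrow maps. -/
def IsSubrep {k : Type} [Field k] {d : Q.V → ℕ} (M : Q.Rep k d)
    (U : ∀ i : Q.V, Submodule k (Fin (d i) → k)) : Prop :=
  ∀ a : Q.A, ∀ x ∈ U (Q.src a), (M a).mulVec x ∈ U (Q.tgt a)

/-- The dimension vector of a family of subspaces. -/
noncomputable def dimVec {k : Type} [Field k] {d : Q.V → ℕ}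
    (U : ∀ i : Q.V, Submodule k (Fin (d i) → k)) : Q.V → ℕ :=
  fun i => Module.finrank k (U i)

/-- The slope of a dimension vector with respect to a stability `Θ`. -/
def slope (Θ : Q.V → ℤ) (e : Q.V → ℕ) : ℚ :=
  ((∑ i, Θ i * e i : ℤ) : ℚ) / ((∑ i, e i : ℕ) : ℚ)

/-- A representation is semistable if all proper nonzero subrepresentations have
slope at most the slope of the representation. -/
def Semistable {k : Type} [Field k] (Θ : Q.V → ℤ) {d : Q.V → ℕ} (M : Q.Rep k d) : Prop :=
  ∀ U : ∀ i : Q.V, Submodule k (Fin (d i) → k), IsSubrep M U →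
    U ≠ (fun _ => ⊥) → U ≠ (fun _ => ⊤) → slope Θ (dimVec U) ≤ slope Θ d

/-- A representation is stable if all proper nonzero subrepresentations have
slope strictly less than the slope of the representation. -/
def Stable {k : Type} [Field k] (Θ : Q.V → ℤ) {d : Q.V → ℕ} (M : Q.Rep k d) : Prop :=
  ∀ U : ∀ i : Q.V, Submodule k (Fin (d i) → k), IsSubrep M U →
    U ≠ (fun _ => ⊥) → U ≠ (fun _ => ⊤) → slope Θ (dimVec U) < slope Θ d

/-- Isomorphism of representations: a family of linear isomorphisms intertwining
the arrow maps. For representations of equal dimension vector this is the usual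
notion of isomorphism via tuples of invertible matrices. -/
def Iso {k : Type} [Field k] {d e : Q.V → ℕ} (M : Q.Rep k d) (N : Q.Rep k e) : Prop :=
  ∃ g : ∀ i : Q.V, (Fin (d i) → k) ≃ₗ[k] (Fin (e i) → k),
    ∀ a : Q.A, ∀ x : Fin (d (Q.src a)) → k,
      g (Q.tgt a) ((M a).mulVec x) = (N a).mulVec (g (Q.src a) x)

/-- Base change of a representation along a field embedding (entrywise application). -/
def mapRep {k K : Type} [Field k] [Field K] (φ : k →+* K) {d : Q.V → ℕ}
    (M : Q.Rep k d) : Q.Rep K d :=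
  fun a => (M a).map φ

/-- A representation over a finite field is absolutely stable if all its base changes
to finite extension fields are stable. -/
def AbsStable {k : Type} [Field k] (Θ : Q.V → ℤ) {d : Q.V → ℕ} (M : Q.Rep k d) : Prop :=
  ∀ (K : Type) [Field K] [Fintype K] (φ : k →+* K), Stable Θ (mapRep φ M)

/-- The number of isomorphism classes of representations of `Q` over `k` of dimension
vector `d` satisfying the property `P`. -/
noncomputable def numClasses (Q : FinQuiver) (k : Type) [Field k] (d : Q.V → ℕ)
    (P : Q.Rep k d → Prop) : ℕ :=
  Nat.card (Quot (fun (M N : {M : Q.Rep k d // P M}) => Iso M.1 N.1))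

/-- Direct sum of two representations (block-diagonal matrices). -/
def dsum {k : Type} [Field k] {d e : Q.V → ℕ} (M : Q.Rep k d) (N : Q.Rep k e) :
    Q.Rep k (d + e) :=
  fun a => Matrix.reindex finSumFinEquiv finSumFinEquiv (Matrix.fromBlocks (M a) 0 0 (N a))

/-- `n`-fold direct sum of representations with a common dimension vector. -/
def dsumMany {k : Type} [Field k] {e : Q.V → ℕ} (n : ℕ) (S : Fin n → Q.Rep k e) :
    Q.Rep k (fun i => n * e i) :=
  fun a => Matrix.of fun x y =>
    let xp := finProdFinEquiv.symm x
    let yp := finProdFinEquiv.symm y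
    if xp.1 = yp.1 then S xp.1 a xp.2 yp.2 else 0

/-- The sum of a finite family of dimension vectors. -/
def sumDims : (n : ℕ) → (Fin n → Q.V → ℕ) → (Q.V → ℕ)
  | 0, _ => 0
  | n + 1, e => e 0 + sumDims n (fun l => e l.succ)

/-- Direct sum of a finite family of representations of varying dimension vectors. -/
def dsumFam {k : Type} [Field k] :
    (n : ℕ) → (e : Fin n → Q.V → ℕ) → (S : ∀ l : Fin n, Q.Rep k (e l)) →
      Q.Rep k (sumDims n e)
  | 0, _, _ => fun _ => Matrix.of fun x _ => x.elim0
  | n + 1, e, S => dsum (S 0) (dsumFam n (fun l => e l.succ) (fun l => S l.succ))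

/-- `IsoDirSumOf P M` holds iff `M` is isomorphic to a finite direct sum of
representations satisfying `P`. -/
inductive IsoDirSumOf {k : Type} [Field k] (P : ∀ {e : Q.V → ℕ}, Q.Rep k e → Prop) :
    ∀ {d : Q.V → ℕ}, Q.Rep k d → Prop
  | base {d : Q.V → ℕ} (M : Q.Rep k d) : P M → IsoDirSumOf P M
  | sum {d e : Q.V → ℕ} (M : Q.Rep k d) (N : Q.Rep k e) :
      IsoDirSumOf P M → IsoDirSumOf P N → IsoDirSumOf P (dsum M N)
  | iso {d : Q.V → ℕ} (M N : Q.Rep k d) : IsoDirSumOf P M → Iso M N → IsoDirSumOf P N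

/-- A representation is polystable of slope `μ` if it is isomorphic to a finite direct
sum of stable representations of slope `μ`. -/
def Polystable {k : Type} [Field k] (Θ : Q.V → ℤ) (μ : ℚ) {d : Q.V → ℕ}
    (M : Q.Rep k d) : Prop :=
  IsoDirSumOf (fun {e} X => Stable Θ X ∧ e ≠ 0 ∧ slope Θ e = μ) M

/-- The endomorphism algebra of a representation, as a subalgebra of the product of
matrix algebras at the vertices. -/
def EndAlg {k : Type} [Field k] {d : Q.V → ℕ} (M : Q.Rep k d) :
    Subalgebra k (∀ i : Q.V, Matrix (Fin (d i)) (Fin (d i)) k) where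
  carrier := {f | ∀ a : Q.A, f (Q.tgt a) * M a = M a * f (Q.src a)}
  mul_mem' := by
    intro f g hf hg a
    show f (Q.tgt a) * g (Q.tgt a) * M a = M a * (f (Q.src a) * g (Q.src a))
    rw [Matrix.mul_assoc, hg a, ← Matrix.mul_assoc, hf a, Matrix.mul_assoc]
  add_mem' := by
    intro f g hf hg a
    simp only [Pi.add_apply, Matrix.add_mul, Matrix.mul_add, hf a, hg a]
  algebraMap_mem' := by
    intro c a
    simp [Pi.algebraMap_apply, Algebra.algebraMap_eq_smul_one]
end FinQuiver

namespace FinQuiverProofAux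
open FinQuiver Matrix

variable {Q : FinQuiver} {k : Type} [Field k]

lemma slope_add_contra (Θ : Q.V → ℤ) {e e' d : Q.V → ℕ}
    (hsum : ∀ i, e i + e' i = d i)
    (he : 0 < ∑ i, e i) (he' : 0 < ∑ i, e' i)
    (h1 : slope Θ e < slope Θ d) (h2 : slope Θ e' < slope Θ d) : False := by
  have hB : (0:ℚ) < ((∑ i, e i : ℕ) : ℚ) := by exact_mod_cast he
  have hB' : (0:ℚ) < ((∑ i, e' i : ℕ) : ℚ) := by exact_mod_cast he'
  have hDeq : (∑ i, d i) = (∑ i, e i) + (∑ i, e' i) := by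
    rw [← Finset.sum_add_distrib]
    exact Finset.sum_congr rfl fun i _ => (hsum i).symm
  have hAeq : (∑ i, Θ i * d i : ℤ) = (∑ i, Θ i * e i) + (∑ i, Θ i * e' i) := by
    rw [← Finset.sum_add_distrib]
    refine Finset.sum_congr rfl fun i _ => ?_
    have : ((d i : ℤ)) = (e i : ℤ) + (e' i : ℤ) := by exact_mod_cast (hsum i).symm
    rw [this]; ring
  have hD : (0:ℚ) < ((∑ i, d i : ℕ) : ℚ) := by
    have : 0 < ∑ i, d i := by omega
    exact_mod_cast this
  unfold FinQuiver.slope at h1 h2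
  rw [div_lt_div_iff₀ hB hD] at h1
  rw [div_lt_div_iff₀ hB' hD] at h2
  have hDq : ((∑ i, d i : ℕ) : ℚ) = ((∑ i, e i : ℕ):ℚ) + ((∑ i, e' i : ℕ):ℚ) := by
    exact_mod_cast hDeq
  have hAq : ((∑ i, Θ i * d i : ℤ) : ℚ) = ((∑ i, Θ i * e i : ℤ):ℚ) + ((∑ i, Θ i * e' i : ℤ):ℚ) := by
    exact_mod_cast hAeq
  rw [hDq, hAq] at h1 h2
  nlinarith [h1, h2]

lemma isUnit_of_endalg_ne_zero {Θ : Q.V → ℤ} {d : Q.V → ℕ}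
    (M : Q.Rep k d) (hM : Stable Θ M)
    (f : ∀ i : Q.V, Matrix (Fin (d i)) (Fin (d i)) k) (hf : f ∈ EndAlg M)
    (hf0 : f ≠ 0) : ∀ i, IsUnit (f i) := by
  classical
  set U : ∀ i : Q.V, Submodule k (Fin (d i) → k) :=
    fun i => LinearMap.ker (f i).mulVecLin with hU
  set W : ∀ i : Q.V, Submodule k (Fin (d i) → k) :=
    fun i => LinearMap.range (f i).mulVecLin with hW
  have hUsub : IsSubrep M U := by
    intro a x hx
    simp only [hU, LinearMap.mem_ker, Matrix.mulVecLin_apply] at hx ⊢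
    rw [Matrix.mulVec_mulVec, hf a, ← Matrix.mulVec_mulVec, hx, Matrix.mulVec_zero]
  have hWsub : IsSubrep M W := by
    intro a x hx
    simp only [hW, LinearMap.mem_range, Matrix.mulVecLin_apply] at hx ⊢
    obtain ⟨y, hy⟩ := hx
    exact ⟨(M a).mulVec y, by rw [Matrix.mulVec_mulVec, hf a, ← Matrix.mulVec_mulVec, hy]⟩
  by_cases hbot : U = fun _ => ⊥
  · intro i
    rw [Matrix.isUnit_iff_isUnit_det, isUnit_iff_ne_zero]
    intro hdet
    obtain ⟨v, hv0, hv⟩ := (Matrix.exists_mulVec_eq_zero_iff).2 hdet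
    have hmem : v ∈ U i := by
      simp only [hU, LinearMap.mem_ker, Matrix.mulVecLin_apply]; exact hv
    rw [hbot] at hmem
    exact hv0 (by simpa using hmem)
  · exfalso
    have htop : U ≠ fun _ => ⊤ := by
      intro h
      apply hf0
      funext i
      ext r c
      have hx : (Pi.single c (1:k)) ∈ U i := by rw [h]; trivial
      simp only [hU, LinearMap.mem_ker, Matrix.mulVecLin_apply] at hx
      have := congrFun hx r
      simpa using this
    obtain ⟨i0, hi0⟩ : ∃ i, U i ≠ ⊥ := by
      by_contra h
      push_neg at h
      exact hbot (funext fun i => h i)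
    obtain ⟨i1, hi1⟩ : ∃ i, U i ≠ ⊤ := by
      by_contra h
      push_neg at h
      exact htop (funext fun i => h i)
    have hWbot : W ≠ fun _ => ⊥ := by
      intro h
      apply hi1
      have hr : LinearMap.range (f i1).mulVecLin = ⊥ := congrFun h i1
      rw [LinearMap.range_eq_bot] at hr
      simp only [hU, hr]
      exact LinearMap.ker_zero
    have hWtop : W ≠ fun _ => ⊤ := by
      intro h
      apply hi0
      have hr : LinearMap.range (f i0).mulVecLin = ⊤ := congrFun h i0
      have hrank := LinearMap.finrank_range_add_finrank_ker (f i0).mulVecLin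
      rw [hr, finrank_top, Module.finrank_fin_fun] at hrank
      have h0 : Module.finrank k (LinearMap.ker (f i0).mulVecLin) = 0 := by
        have : Module.finrank k (Fin (d i0) → k) = d i0 := Module.finrank_fin_fun k
        omega
      exact Submodule.finrank_eq_zero.1 h0
    have h1 := hM U hUsub hbot htop
    have h2 := hM W hWsub hWbot hWtop
    have hdim : ∀ i, dimVec U i + dimVec W i = d i := by
      intro i
      have hrank := LinearMap.finrank_range_add_finrank_ker (f i).mulVecLin
      rw [Module.finrank_fin_fun] at hrank
      show Module.finrank k (LinearMap.ker (f i).mulVecLin)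
          + Module.finrank k (LinearMap.range (f i).mulVecLin) = d i
      omega
    have hposU : 0 < ∑ i, dimVec U i := by
      have : 0 < dimVec U i0 := by
        rw [dimVec, Module.finrank_pos_iff]
        exact Submodule.nontrivial_iff_ne_bot.2 hi0
      calc 0 < dimVec U i0 := this
        _ ≤ ∑ i, dimVec U i := Finset.single_le_sum (fun i _ => Nat.zero_le _) (Finset.mem_univ i0)
    have hposW : 0 < ∑ i, dimVec W i := by
      obtain ⟨j, hj⟩ : ∃ j, W j ≠ ⊥ := by
        by_contra h
        push_neg at h
        exact hWbot (funext fun i => h i)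
      have : 0 < dimVec W j := by
        rw [dimVec, Module.finrank_pos_iff]
        exact Submodule.nontrivial_iff_ne_bot.2 hj
      calc 0 < dimVec W j := this
        _ ≤ ∑ i, dimVec W i := Finset.single_le_sum (fun i _ => Nat.zero_le _) (Finset.mem_univ j)
    exact slope_add_contra Θ hdim hposU hposW h1 h2

end FinQuiverProofAux

open FinQuiver FinQuiverProofAux in
/-- For a stable representation `M` of a quiver over a finite field `k`, every nonzero
endomorphism of `M` is an isomorphism (i.e. invertible at every vertex), the
endomorphism ring is commutative, and hence `End(M)` is a finite field extension
of `k`. -/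
theorem end_of_stable_is_finite_field (k : Type) [Field k] [Fintype k] (Q : FinQuiver)
    (Θ : Q.V → ℤ) (d : Q.V → ℕ) (hd : d ≠ 0) (M : Q.Rep k d) (hM : Stable Θ M) :
    (∀ f : ↥(EndAlg M), f ≠ 0 → ∀ i : Q.V,
      IsUnit ((f : ∀ i : Q.V, Matrix (Fin (d i)) (Fin (d i)) k) i)) ∧
    (∀ f g : ↥(EndAlg M), f * g = g * f) ∧
    IsField ↥(EndAlg M) ∧
    FiniteDimensional k ↥(EndAlg M) := by
  classical
  have key : ∀ f : ↥(EndAlg M), f ≠ 0 → ∀ i : Q.V,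
      IsUnit ((f : ∀ i : Q.V, Matrix (Fin (d i)) (Fin (d i)) k) i) := by
    intro f hf
    exact isUnit_of_endalg_ne_zero M hM f.1 f.2 (fun h => hf (Subtype.ext h))
  have hinv : ∀ f : ↥(EndAlg M), f ≠ 0 → IsUnit f := by
    intro f hf
    have hu := key f hf
    have hdet : ∀ i, IsUnit ((f : ∀ i : Q.V, Matrix (Fin (d i)) (Fin (d i)) k) i).det :=
      fun i => (Matrix.isUnit_iff_isUnit_det _).1 (hu i)
    set g : ∀ i : Q.V, Matrix (Fin (d i)) (Fin (d i)) k := fun i => (f.1 i)⁻¹ with hg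
    have hgmem : g ∈ EndAlg M := by
      intro a
      have hfa := f.2 a
      calc g (Q.tgt a) * M a
          = g (Q.tgt a) * (M a * (f.1 (Q.src a) * g (Q.src a))) := by
            rw [hg, Matrix.mul_nonsing_inv _ (hdet _), Matrix.mul_one]
        _ = (g (Q.tgt a) * (f.1 (Q.tgt a) * M a)) * g (Q.src a) := by
            rw [← Matrix.mul_assoc (M a), ← hfa, ← Matrix.mul_assoc]
        _ = M a * g (Q.src a) := by
            rw [← Matrix.mul_assoc, hg, Matrix.nonsing_inv_mul _ (hdet _), Matrix.one_mul]
    have hfg : f * (⟨g, hgmem⟩ : ↥(EndAlg M)) = 1 := by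
      refine Subtype.ext (funext fun i => ?_)
      exact Matrix.mul_nonsing_inv _ (hdet i)
    have hgf : (⟨g, hgmem⟩ : ↥(EndAlg M)) * f = 1 := by
      refine Subtype.ext (funext fun i => ?_)
      exact Matrix.nonsing_inv_mul _ (hdet i)
    exact ⟨⟨f, ⟨g, hgmem⟩, hfg, hgf⟩, rfl⟩
  obtain ⟨i0, hi0⟩ : ∃ i, d i ≠ 0 := by
    by_contra h
    push_neg at h
    exact hd (funext h)
  have hpos : 0 < d i0 := Nat.pos_of_ne_zero hi0
  have hnt : Nontrivial ↥(EndAlg M) := by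
    refine ⟨0, 1, fun h => ?_⟩
    have h2 : (0 : Matrix (Fin (d i0)) (Fin (d i0)) k) = 1 := by
      have h1 := congrArg Subtype.val h
      rw [ZeroMemClass.coe_zero, OneMemClass.coe_one] at h1
      exact congrFun h1 i0
    have h3 := Matrix.ext_iff.2 h2 ⟨0, hpos⟩ ⟨0, hpos⟩
    simp [Matrix.one_apply] at h3
  letI : DivisionRing ↥(EndAlg M) := DivisionRing.ofIsUnitOrEqZero
    (fun a => or_iff_not_imp_right.2 (hinv a))
  haveI : Finite ↥(EndAlg M) := Subtype.finite
  letI : Field ↥(EndAlg M) := littleWedderburn _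
  refine ⟨key, fun f g => mul_comm f g, ?_, ?_⟩
  · exact ⟨exists_pair_ne _, fun f g => mul_comm f g, fun {a} ha => (hinv a ha).exists_right_inv⟩
  · infer_instance
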